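/- For every d with 0 < d < 1/2 there exists a constant C(d) > 0 such that, for all y ∈ (0,π), ∫₀¹ C(d) x^{d-1}(1-x)^{1-2d}(1+x) / |1 - x e^{iy}|² dx = (2 sin(y/2))^{-2d}. In other words, the FARIMA(0,d,0) spectral density f(y) = (2π)^{-1} |2 sin(y/2)|^{-2d} is the mixture over x ∈ [0,1) of AR(1) spectral densities (2π)^{-1}|1 - x e^{iy}|^{-2} with mixing density φ(x) = C(d) x^{d-1}(1-x)^{1-2d}(1+x). -/

import Mathlib

open MeasureTheory Complex

section FARIMAaux

/-- Squared modulus of `1 - x e^{iy}`. -/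
lemma farima_abs_sq (x y : ℝ) :
    ‖1 - (x : ℂ) * Complex.exp (Complex.I * (y : ℂ))‖ ^ 2
      = (1 - x) ^ 2 + x * (4 * Real.sin (y / 2) ^ 2) := by
  have h := Real.sin_sq_eq_half_sub (y / 2)
  rw [show 2 * (y / 2) = y by ring] at h
  rw [Complex.sq_norm, mul_comm Complex.I (y : ℂ), Complex.exp_mul_I, Complex.normSq_apply]
  simp only [Complex.sub_re, Complex.one_re, Complex.mul_re, Complex.ofReal_re,
    Complex.add_re, Complex.cos_ofReal_re, Complex.mul_im, Complex.sin_ofReal_re,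
    Complex.I_re, Complex.I_im, Complex.ofReal_im, Complex.add_im, Complex.cos_ofReal_im,
    Complex.sin_ofReal_im, Complex.sub_im, Complex.one_im]
  rw [h]
  linear_combination x^2 * Real.sin_sq_add_cos_sq y

/-- Image of the substitution map `x ↦ (1-x)²/(xt)` on `(0,1)` is `(0,∞)`. -/
lemma farima_image (t : ℝ) (ht : 0 < t) :
    (fun x : ℝ => (1 - x) ^ 2 / (x * t)) '' Set.Ioo 0 1 = Set.Ioi 0 := by
  apply Set.Subset.antisymm
  · rintro _ ⟨x, ⟨hx0, hx1⟩, rfl⟩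
    have h1 : (0:ℝ) < (1 - x) ^ 2 := by nlinarith
    exact div_pos h1 (by positivity)
  · rintro w (hw : 0 < w)
    set a : ℝ := 2 + w * t with ha_def
    have ha2 : 2 < a := by nlinarith
    have harg : (0:ℝ) ≤ a ^ 2 - 4 := by nlinarith
    set r : ℝ := Real.sqrt (a ^ 2 - 4) with hr_def
    have hr2 : r ^ 2 = a ^ 2 - 4 := Real.sq_sqrt harg
    have hr0 : 0 ≤ r := Real.sqrt_nonneg _
    have hra : r < a := by
      have h := Real.sqrt_lt_sqrt harg (show a ^ 2 - 4 < a ^ 2 by nlinarith)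
      rwa [Real.sqrt_sq (by linarith)] at h
    have hwtr : w * t < r := by
      rw [hr_def]
      refine (Real.lt_sqrt (by positivity)).2 ?_
      nlinarith
    set x : ℝ := (a - r) / 2 with hx_def
    have hx0 : 0 < x := by rw [hx_def]; linarith
    have hx1 : x < 1 := by rw [hx_def, ha_def]; linarith
    refine ⟨x, ⟨hx0, hx1⟩, ?_⟩
    have hquad : x ^ 2 - a * x + 1 = 0 := by
      rw [hx_def]; field_simp; nlinarith [hr2]
    have hnum : (1 - x) ^ 2 = x * t * w := by
      have ha' : a = 2 + w * t := ha_def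
      nlinarith [hquad]
    show (1 - x) ^ 2 / (x * t) = w
    rw [hnum]
    field_simp

end FARIMAaux

/-- The FARIMA(0,d,0) spectral density as a mixture of AR(1) spectral densities:
for `0 < d < 1/2` there is `C(d) > 0` such that for all `y ∈ (0,π)`,
`∫₀¹ C(d) x^{d-1} (1-x)^{1-2d} (1+x) / |1 - x e^{iy}|² dx = (2 sin(y/2))^{-2d}`. -/
theorem FARIMA_is_mixture_of_AR1 (d : ℝ) (hd0 : 0 < d) (hd1 : d < 1/2) :
    ∃ C : ℝ, 0 < C ∧ ∀ y ∈ Set.Ioo (0:ℝ) Real.pi,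
      ∫ x in Set.Ioo (0:ℝ) 1,
          C * x ^ (d - 1) * (1 - x) ^ (1 - 2 * d) * (1 + x) /
            ‖1 - (x : ℂ) * Complex.exp (Complex.I * (y : ℂ))‖ ^ 2 =
        (2 * Real.sin (y / 2)) ^ (-(2 * d)) := by
  classical
  set G : ℝ → ℝ := fun w => w ^ (-d) / (1 + w) with hG_def
  -- continuity of G away from 0
  have hGcont : ∀ s : Set ℝ, s ⊆ Set.Ioi 0 → ContinuousOn G s := by
    intro s hs w hw
    have hw0 : (0:ℝ) < w := hs hw
    refine ContinuousWithinAt.div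
      (continuousWithinAt_id.rpow_const (Or.inl (ne_of_gt hw0)))
      (continuousWithinAt_const.add continuousWithinAt_id) ?_
    exact ne_of_gt (by linarith)
  -- integrability of G on (0,∞)
  have hGint : IntegrableOn G (Set.Ioi 0) := by
    have h01 : IntegrableOn G (Set.Ioc 0 1) := by
      have hbase : IntegrableOn (fun w : ℝ => w ^ (-d)) (Set.Ioc 0 1) := by
        have h := (intervalIntegrable_iff_integrableOn_Ioc_of_le
            (by norm_num : (0:ℝ) ≤ 1)).1
          (intervalIntegral.intervalIntegrable_rpow' (a := 0) (b := 1) (r := -d)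
            (by linarith))
        exact h
      refine hbase.mono'
        ((hGcont _ Set.Ioc_subset_Ioi_self).aestronglyMeasurable measurableSet_Ioc) ?_
      filter_upwards [ae_restrict_mem measurableSet_Ioc] with w hw
      have hw0 : 0 < w := hw.1
      have h1 : (0:ℝ) < 1 + w := by linarith
      have hGw : G w = w ^ (-d) / (1 + w) := rfl
      have habs : ‖G w‖ = w ^ (-d) / (1 + w) := by
        rw [hGw, Real.norm_eq_abs, _root_.abs_of_nonneg (by positivity)]
      rw [habs]
      calc w ^ (-d) / (1 + w) ≤ w ^ (-d) / 1 :=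
            div_le_div_of_nonneg_left (by positivity) one_pos (by linarith)
        _ = w ^ (-d) := by ring
    have h1inf : IntegrableOn G (Set.Ioi 1) := by
      have hbase : IntegrableOn (fun w : ℝ => w ^ (-d - 1)) (Set.Ioi 1) :=
        integrableOn_Ioi_rpow_of_lt (by linarith) one_pos
      refine hbase.mono'
        ((hGcont _ (Set.Ioi_subset_Ioi (by norm_num))).aestronglyMeasurable
          measurableSet_Ioi) ?_
      filter_upwards [ae_restrict_mem measurableSet_Ioi] with w hw
      have hw1 : (1:ℝ) < w := hw
      have hw0 : (0:ℝ) < w := by linarith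
      have hGw : G w = w ^ (-d) / (1 + w) := rfl
      have habs : ‖G w‖ = w ^ (-d) / (1 + w) := by
        rw [hGw, Real.norm_eq_abs, _root_.abs_of_nonneg (by positivity)]
      rw [habs]
      calc w ^ (-d) / (1 + w) ≤ w ^ (-d) / w :=
            div_le_div_of_nonneg_left (by positivity) hw0 (by linarith)
        _ = w ^ (-d - 1) := by rw [Real.rpow_sub hw0, Real.rpow_one]
    have hunion : IntegrableOn G (Set.Ioc 0 1 ∪ Set.Ioi 1) := h01.union h1inf
    refine hunion.mono_set ?_
    intro w hw
    rcases le_or_gt w 1 with h | h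
    · exact Or.inl ⟨hw, h⟩
    · exact Or.inr h
  set J : ℝ := ∫ w in Set.Ioi (0:ℝ), G w with hJ_def
  have hJpos : 0 < J := by
    have hae : 0 ≤ᵐ[volume.restrict (Set.Ioi (0:ℝ))] G := by
      filter_upwards [ae_restrict_mem measurableSet_Ioi] with w hw
      have hw0 : (0:ℝ) < w := hw
      positivity
    rw [hJ_def, setIntegral_pos_iff_support_of_nonneg_ae hae hGint]
    have hsub : Set.Ioi (0:ℝ) ⊆ Function.support G ∩ Set.Ioi 0 := by
      intro w hw
      have hw0 : (0:ℝ) < w := hw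
      refine ⟨ne_of_gt (div_pos (Real.rpow_pos_of_pos hw0 _) (by linarith)), hw⟩
    refine lt_of_lt_of_le ?_ (measure_mono hsub)
    simp [Real.volume_Ioi]
  refine ⟨J⁻¹, inv_pos.2 hJpos, ?_⟩
  intro y hy
  obtain ⟨hy0, hyπ⟩ := hy
  have hs2 : 0 < Real.sin (y / 2) :=
    Real.sin_pos_of_pos_of_lt_pi (by linarith) (by linarith [Real.pi_pos])
  set t : ℝ := 4 * Real.sin (y / 2) ^ 2 with ht_def
  have ht : 0 < t := by positivity
  set φ : ℝ → ℝ := fun x => (1 - x) ^ 2 / (x * t) with hφ_def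
  set φ' : ℝ → ℝ := fun x => -((1 - x) * (1 + x)) / (x ^ 2 * t) with hφ'_def
  have hderiv : ∀ x ∈ Set.Ioo (0:ℝ) 1, HasDerivAt φ (φ' x) x := by
    intro x hx
    have hx0 : (0:ℝ) < x := hx.1
    have hxt : x * t ≠ 0 := by positivity
    have h1 : HasDerivAt (fun x : ℝ => (1 - x) ^ 2) (-(2 * (1 - x))) x := by
      have h := ((hasDerivAt_id x).const_sub 1).fun_pow 2
      refine h.congr_deriv ?_
      simp [pow_one]
    have h2 : HasDerivAt (fun x : ℝ => x * t) t x := by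
      simpa using (hasDerivAt_id x).mul_const t
    have h3 := h1.fun_div h2 hxt
    refine h3.congr_deriv ?_
    rw [hφ'_def]
    field_simp
    ring
  have habs_deriv : ∀ x ∈ Set.Ioo (0:ℝ) 1,
      |φ' x| = (1 - x) * (1 + x) / (x ^ 2 * t) := by
    intro x hx
    obtain ⟨hx0, hx1⟩ := hx
    rw [hφ'_def]
    rw [_root_.abs_div, _root_.abs_of_nonpos (by nlinarith), _root_.abs_of_pos (by positivity)]
    ring_nf
  have hinj : Set.InjOn φ (Set.Ioo 0 1) := by
    have hanti : StrictAntiOn φ (Set.Ioo 0 1) := by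
      apply strictAntiOn_of_deriv_neg (convex_Ioo 0 1)
      · exact fun x hx => (hderiv x hx).continuousAt.continuousWithinAt
      · intro x hx
        rw [interior_Ioo] at hx
        rw [(hderiv x hx).deriv]
        obtain ⟨hx0, hx1⟩ := hx
        rw [hφ'_def]
        exact div_neg_of_neg_of_pos (by nlinarith) (by positivity)
    exact hanti.injOn
  have himg : φ '' Set.Ioo 0 1 = Set.Ioi 0 := farima_image t ht
  -- key pointwise identity
  have hkey : ∀ x ∈ Set.Ioo (0:ℝ) 1,
      J⁻¹ * x ^ (d - 1) * (1 - x) ^ (1 - 2 * d) * (1 + x) /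
          ‖1 - (x : ℂ) * Complex.exp (Complex.I * (y : ℂ))‖ ^ 2
        = (J⁻¹ * t ^ (-d)) * (|φ' x| • G (φ x)) := by
    intro x hx
    obtain ⟨hx0, hx1⟩ := hx
    have hx1' : (0:ℝ) < 1 - x := by linarith
    rw [farima_abs_sq, ← ht_def, habs_deriv x ⟨hx0, hx1⟩, smul_eq_mul]
    show _ = J⁻¹ * t ^ (-d) *
      ((1 - x) * (1 + x) / (x ^ 2 * t) * ((φ x) ^ (-d) / (1 + φ x)))
    rw [hφ_def]
    show J⁻¹ * x ^ (d - 1) * (1 - x) ^ (1 - 2 * d) * (1 + x) / ((1 - x) ^ 2 + x * t)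
      = J⁻¹ * t ^ (-d) * ((1 - x) * (1 + x) / (x ^ 2 * t) *
          (((1 - x) ^ 2 / (x * t)) ^ (-d) / (1 + (1 - x) ^ 2 / (x * t))))
    have hphi : ((1 - x) ^ 2 / (x * t)) ^ (-d)
        = ((1 - x) ^ (-(2 * d))) * (x ^ d * t ^ d) := by
      rw [Real.div_rpow (by positivity) (by positivity),
        ← Real.rpow_natCast (1 - x) 2, ← Real.rpow_mul (le_of_lt hx1'),
        show ((2:ℕ):ℝ) * (-d) = -(2 * d) by push_cast; ring,
        Real.rpow_neg (by positivity : (0:ℝ) ≤ x * t), div_inv_eq_mul,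
        Real.mul_rpow (le_of_lt hx0) (le_of_lt ht)]
    rw [hphi]
    have hxd1 : x ^ (d - 1) = x ^ d / x := by
      rw [Real.rpow_sub hx0, Real.rpow_one]
    have h1x : (1 - x) ^ (1 - 2 * d) = (1 - x) * (1 - x) ^ (-(2 * d)) := by
      rw [show (1 - 2*d) = 1 + -(2*d) by ring, Real.rpow_add hx1', Real.rpow_one]
    have htd : t ^ (-d) * t ^ d = 1 := by
      rw [← Real.rpow_add ht]; simp
    rw [hxd1, h1x, Real.rpow_neg (le_of_lt ht) d]
    have hxd : (x:ℝ) ^ d ≠ 0 := ne_of_gt (Real.rpow_pos_of_pos hx0 d)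
    have htd' : (t:ℝ) ^ d ≠ 0 := ne_of_gt (Real.rpow_pos_of_pos ht d)
    have hDne : ((1 - x) ^ 2 + x * t) ≠ 0 := by positivity
    have hone : (1 + (1 - x) ^ 2 / (x * t)) ≠ 0 := by positivity
    field_simp
    ring
  -- change of variables
  have hsub : ∫ w in Set.Ioi (0:ℝ), G w
      = ∫ x in Set.Ioo (0:ℝ) 1, |φ' x| • G (φ x) := by
    rw [← himg]
    exact integral_image_eq_integral_abs_deriv_smul measurableSet_Ioo
      (fun x hx => (hderiv x hx).hasDerivWithinAt) hinj G
  calc ∫ x in Set.Ioo (0:ℝ) 1,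
        J⁻¹ * x ^ (d - 1) * (1 - x) ^ (1 - 2 * d) * (1 + x) /
          ‖1 - (x : ℂ) * Complex.exp (Complex.I * (y : ℂ))‖ ^ 2
      = ∫ x in Set.Ioo (0:ℝ) 1, (J⁻¹ * t ^ (-d)) * (|φ' x| • G (φ x)) := by
        apply setIntegral_congr_fun measurableSet_Ioo
        intro x hx
        exact hkey x hx
    _ = (J⁻¹ * t ^ (-d)) * ∫ x in Set.Ioo (0:ℝ) 1, |φ' x| • G (φ x) := by
        rw [MeasureTheory.integral_const_mul]
    _ = (J⁻¹ * t ^ (-d)) * J := by rw [← hsub, hJ_def]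
    _ = t ^ (-d) := by
        field_simp
    _ = (2 * Real.sin (y / 2)) ^ (-(2 * d)) := by
        have h2s : (0:ℝ) < 2 * Real.sin (y / 2) := by linarith
        rw [show -(2 * d) = 2 * (-d) by ring,
          Real.rpow_mul (le_of_lt h2s), Real.rpow_two]
        congr 1
        rw [ht_def]; ring
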